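/- Let k ∈ ℝ, let σ be a finite (nonnegative) measure on ℝ³ whose support is contained in a compact set K ⊆ ℝ³, and let J : ℝ³ → ℂ³ be a bounded measurable vector density. Define the vector potential A(x) = ∫ exp(−i·k·‖x−y‖)/(4π‖x−y‖)·J(y) dσ(y) for x ∉ K. Then A is differentiable on ℝ³ \ K and its curl is obtained by differentiating under the integral sign: curl A (x) = ∫ ∇_x G_k(x,y) × J(y) dσ(y) for every x ∉ K, where ∇_x G_k(x,y) = (exp(−i·k·r)/(4πr))·(1/r + i·k)·(y − x)/r with r = ‖x−y‖. -/

import Mathlib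

open Complex MeasureTheory

lemma hasFDerivAt_norm' {F : Type*} [NormedAddCommGroup F] [InnerProductSpace ℝ F]
    (x : F) (hx : x ≠ 0) :
    HasFDerivAt (fun z : F => ‖z‖) ((‖x‖⁻¹ : ℝ) • innerSL ℝ x) x := by
  have h1 : HasFDerivAt (fun z : F => ‖z‖ ^ 2) (2 • (innerSL ℝ x)) x :=
    (hasStrictFDerivAt_norm_sq x).hasFDerivAt
  have h2 : (‖x‖ : ℝ) ^ 2 ≠ 0 := pow_ne_zero _ (norm_ne_zero_iff.mpr hx)
  have h3 := h1.sqrt h2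
  have h4 : (fun z : F => Real.sqrt (‖z‖ ^ 2)) = fun z : F => ‖z‖ := by
    funext z; rw [Real.sqrt_sq (norm_nonneg z)]
  rw [h4] at h3
  convert h3 using 1
  ext v
  simp [Real.sqrt_sq (norm_nonneg x), two_smul]
  ring

lemma hasDerivAt_helmG (k : ℝ) (r : ℝ) (hr : r ≠ 0) :
    HasDerivAt (fun r : ℝ => Complex.exp (-Complex.I * (k : ℂ) * (r : ℂ)) /
        ((4 * Real.pi * r : ℝ) : ℂ))
      ((Complex.exp (-Complex.I * (k : ℂ) * (r : ℂ)) / ((4 * Real.pi * r : ℝ) : ℂ)) *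
        (-(Complex.I * (k : ℂ)) - ((r : ℝ) : ℂ)⁻¹)) r := by
  have hπ : (Real.pi : ℝ) ≠ 0 := Real.pi_ne_zero
  have hden : ((4 * Real.pi * r : ℝ) : ℂ) ≠ 0 := by
    simp only [ne_eq, Complex.ofReal_eq_zero]
    intro h
    rcases mul_eq_zero.mp h with h | h
    · rcases mul_eq_zero.mp h with h | h
      · norm_num at h
      · exact hπ h
    · exact hr h
  have h1 : HasDerivAt (fun r : ℝ => ((r : ℂ))) 1 r := by
    simpa using (hasDerivAt_id r).ofReal_comp
  have h2 : HasDerivAt (fun r : ℝ => Complex.exp (-Complex.I * (k : ℂ) * (r : ℂ)))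
      (-Complex.I * (k : ℂ) * Complex.exp (-Complex.I * (k : ℂ) * (r : ℂ))) r := by
    have := ((h1.const_mul (-Complex.I * (k : ℂ))).cexp)
    simpa [mul_comm] using this
  have h3 : HasDerivAt (fun r : ℝ => ((4 * Real.pi * r : ℝ) : ℂ))
      ((4 * Real.pi : ℝ) : ℂ) r := by
    have := h1.const_mul ((4 * Real.pi : ℝ) : ℂ)
    simp only [mul_one] at this
    refine this.congr_of_eventuallyEq (Filter.Eventually.of_forall fun s => ?_)
    push_cast
    ring
  have h4 := h2.div h3 hden
  have hrc : (r:ℂ) ≠ 0 := Complex.ofReal_ne_zero.mpr hr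
  have hπc : ((Real.pi:ℝ):ℂ) ≠ 0 := Complex.ofReal_ne_zero.mpr hπ
  refine h4.congr_deriv ?_
  push_cast
  field_simp

lemma hasFDerivAt_helmG_comp (k : ℝ) (y x : EuclideanSpace ℝ (Fin 3)) (hxy : x ≠ y) :
    HasFDerivAt (fun z : EuclideanSpace ℝ (Fin 3) =>
        Complex.exp (-Complex.I * (k : ℂ) * (‖z - y‖ : ℂ)) / ((4 * Real.pi * ‖z - y‖ : ℝ) : ℂ))
      (((Complex.exp (-Complex.I * (k : ℂ) * (‖x - y‖ : ℂ)) /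
            ((4 * Real.pi * ‖x - y‖ : ℝ) : ℂ)) *
          (-(Complex.I * (k : ℂ)) - ((‖x - y‖ : ℝ) : ℂ)⁻¹) * ((‖x - y‖⁻¹ : ℝ) : ℂ)) •
        (Complex.ofRealCLM.comp (innerSL ℝ (x - y)))) x := by
  have hsub : x - y ≠ 0 := sub_ne_zero.mpr hxy
  have hr : ‖x - y‖ ≠ 0 := norm_ne_zero_iff.mpr hsub
  have hnorm : HasFDerivAt (fun z : EuclideanSpace ℝ (Fin 3) => ‖z - y‖)
      ((‖x - y‖⁻¹ : ℝ) • innerSL ℝ (x - y)) x := by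
    have := (hasFDerivAt_norm' (x - y) hsub).comp x ((hasFDerivAt_id x).sub_const y)
    simpa [Function.comp_def] using this
  have hg := (hasDerivAt_helmG k ‖x - y‖ hr).hasFDerivAt
  have hcomp := hg.comp x hnorm
  refine hcomp.congr_fderiv ?_
  ext v
  simp only [ContinuousLinearMap.smul_apply, ContinuousLinearMap.coe_comp',
    Function.comp_apply, ContinuousLinearMap.toSpanSingleton_apply, ContinuousLinearMap.one_apply,
    Complex.ofRealCLM_apply, smul_eq_mul, Complex.real_smul, Complex.ofReal_mul,
    Complex.ofReal_inv]
  ring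

lemma abs_helmG (k r : ℝ) (hr : 0 < r) :
    ‖Complex.exp (-Complex.I * (k : ℂ) * (r : ℂ)) / ((4 * Real.pi * r : ℝ) : ℂ)‖ =
      (4 * Real.pi * r)⁻¹ := by
  have hpos : 0 < 4 * Real.pi * r := by positivity
  rw [norm_div]
  have h1 : ‖Complex.exp (-Complex.I * (k : ℂ) * (r : ℂ))‖ = 1 := by
    rw [Complex.norm_exp]
    simp [Complex.exp_eq_one_iff]
  rw [h1, Complex.norm_real, Real.norm_eq_abs, abs_of_pos hpos, one_div]

open scoped RealInnerProductSpace in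
lemma helmPhi_norm_le (k : ℝ) (y x : EuclideanSpace ℝ (Fin 3)) (s : ℝ) (hs : 0 < s)
    (hle : s ≤ ‖x - y‖) :
    ‖(Complex.exp (-Complex.I * (k : ℂ) * (‖x - y‖ : ℂ)) / ((4 * Real.pi * ‖x - y‖ : ℝ) : ℂ) *
        (-(Complex.I * (k : ℂ)) - ((‖x - y‖ : ℝ) : ℂ)⁻¹) * ((‖x - y‖⁻¹ : ℝ) : ℂ)) •
      (Complex.ofRealCLM.comp (innerSL ℝ (x - y)))‖ ≤
      (4 * Real.pi * s)⁻¹ * (|k| + s⁻¹) := by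
  set r := ‖x - y‖ with hrdef
  have hr : 0 < r := lt_of_lt_of_le hs hle
  have hA : ‖Complex.ofRealCLM.comp (innerSL ℝ (x - y))‖ ≤ r := by
    apply ContinuousLinearMap.opNorm_le_bound _ hr.le
    intro w
    simp only [ContinuousLinearMap.coe_comp', Function.comp_apply, Complex.ofRealCLM_apply,
      innerSL_apply_apply, Complex.norm_real, Real.norm_eq_abs]
    exact abs_real_inner_le_norm _ _
  have hb : ‖-(Complex.I * (k : ℂ)) - ((r : ℝ) : ℂ)⁻¹‖ ≤ |k| + r⁻¹ := by
    refine le_trans (norm_sub_le _ _) ?_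
    gcongr
    · simp
    · rw [← Complex.ofReal_inv, Complex.norm_real, Real.norm_eq_abs]
      exact le_of_eq (abs_of_pos (by positivity))
  refine le_trans (ContinuousLinearMap.opNorm_smul_le _ _) ?_
  calc ‖Complex.exp (-Complex.I * (k : ℂ) * (r : ℂ)) / ((4 * Real.pi * r : ℝ) : ℂ) *
          (-(Complex.I * (k : ℂ)) - ((r : ℝ) : ℂ)⁻¹) * ((r⁻¹ : ℝ) : ℂ)‖ *
        ‖Complex.ofRealCLM.comp (innerSL ℝ (x - y))‖
      ≤ ((4 * Real.pi * r)⁻¹ * (|k| + r⁻¹) * r⁻¹) * r := by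
        apply mul_le_mul _ hA (norm_nonneg _) (by positivity)
        rw [norm_mul, norm_mul, abs_helmG k r hr]
        gcongr
        · rw [Complex.norm_real, Real.norm_eq_abs]
          exact le_of_eq (abs_of_pos (by positivity))
    _ = (4 * Real.pi * r)⁻¹ * (|k| + r⁻¹) := by field_simp
    _ ≤ (4 * Real.pi * s)⁻¹ * (|k| + s⁻¹) := by
        gcongr <;> first | positivity | linarith [Real.pi_pos]


/-- The Helmholtz vector potential `A(x) = ∫ G_k(x,y) J(y) dσ(y)` of a bounded measurable
vector density `J` against a finite measure `σ` supported in a compact set `K` is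
differentiable off `K`, and its curl is obtained by differentiating under the integral
sign: `curl A (x) = ∫ ∇ₓG_k(x,y) × J(y) dσ(y)` for all `x ∉ K`, where
`∇ₓG_k(x,y) = (exp(−ikr)/(4πr))·(1/r + ik)·(y−x)/r`, `r = ‖x−y‖`. -/
theorem curl_vector_potential (k : ℝ)
    (σ : Measure (EuclideanSpace ℝ (Fin 3))) [IsFiniteMeasure σ]
    (K : Set (EuclideanSpace ℝ (Fin 3))) (hK : IsCompact K) (hsupp : σ Kᶜ = 0)
    (J : EuclideanSpace ℝ (Fin 3) → Fin 3 → ℂ) (hJmeas : Measurable J)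
    (hJbdd : ∃ C : ℝ, ∀ y m, ‖J y m‖ ≤ C)
    (G : EuclideanSpace ℝ (Fin 3) → EuclideanSpace ℝ (Fin 3) → ℂ)
    (hG : ∀ x y, G x y = Complex.exp (-Complex.I * (k : ℂ) * (‖x - y‖ : ℂ)) /
        ((4 * Real.pi * ‖x - y‖ : ℝ) : ℂ))
    (A : EuclideanSpace ℝ (Fin 3) → Fin 3 → ℂ)
    (hA : ∀ x, x ∉ K → ∀ m, A x m = ∫ y, G x y * J y m ∂σ)
    (gradG : EuclideanSpace ℝ (Fin 3) → EuclideanSpace ℝ (Fin 3) → Fin 3 → ℂ)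
    (hgradG : ∀ x y m, gradG x y m =
      G x y * (((1 / ‖x - y‖ : ℝ) : ℂ) + Complex.I * (k : ℂ)) *
        (((y - x) m / ‖x - y‖ : ℝ) : ℂ)) :
    DifferentiableOn ℝ A Kᶜ ∧
    ∀ x ∉ K,
      (![fderiv ℝ (fun z => A z 2) x (EuclideanSpace.single 1 1) -
           fderiv ℝ (fun z => A z 1) x (EuclideanSpace.single 2 1),
         fderiv ℝ (fun z => A z 0) x (EuclideanSpace.single 2 1) -
           fderiv ℝ (fun z => A z 2) x (EuclideanSpace.single 0 1),
         fderiv ℝ (fun z => A z 1) x (EuclideanSpace.single 0 1) -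
           fderiv ℝ (fun z => A z 0) x (EuclideanSpace.single 1 1)]) =
        (fun m : Fin 3 => ∫ y, crossProduct (gradG x y) (J y) m ∂σ) := by
  classical
  obtain ⟨C, hC⟩ := hJbdd
  have hC0 : 0 ≤ C := le_trans (norm_nonneg _) (hC 0 0)
  have hJm : ∀ m : Fin 3, Measurable fun y => J y m :=
    fun m => (measurable_pi_apply m).comp hJmeas
  have hnmeas : ∀ x : EuclideanSpace ℝ (Fin 3),
      Measurable fun y : EuclideanSpace ℝ (Fin 3) => ‖x - y‖ :=
    fun x => (continuous_const.sub continuous_id).norm.measurable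
  have hGmeas : ∀ x, Measurable fun y => G x y := by
    intro x
    have h : (fun y => G x y) = fun y => Complex.exp (-Complex.I * (k : ℂ) * (‖x - y‖ : ℂ)) /
        ((4 * Real.pi * ‖x - y‖ : ℝ) : ℂ) := funext fun y => hG x y
    rw [h]
    exact (Complex.measurable_exp.comp
        ((Complex.measurable_ofReal.comp (hnmeas x)).const_mul _)).div
      (Complex.measurable_ofReal.comp ((hnmeas x).const_mul _))
  have main : ∀ x₀, x₀ ∉ K → ∀ m : Fin 3,
      ∃ L : EuclideanSpace ℝ (Fin 3) →L[ℝ] ℂ,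
        HasFDerivAt (fun z => A z m) L x₀ ∧
        ∀ j : Fin 3, Integrable (fun y => gradG x₀ y j * J y m) σ ∧
          L (EuclideanSpace.single j 1) = ∫ y, gradG x₀ y j * J y m ∂σ := by
    intro x₀ hx₀ m
    obtain ⟨ε, hε, hball⟩ := Metric.isOpen_iff.mp hK.isClosed.isOpen_compl x₀ hx₀
    have hεpos : 0 < ε / 2 := by linarith
    have hsep : ∀ y ∈ K, ∀ x ∈ Metric.ball x₀ (ε / 2), ε / 2 ≤ ‖x - y‖ := by
      intro y hy x hx
      have h1 : ε ≤ dist x₀ y := by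
        by_contra h
        push_neg at h
        exact hball (Metric.mem_ball.mpr (by rwa [dist_comm])) hy
      have h2 := dist_triangle x₀ x y
      have h3 : dist x₀ x < ε / 2 := by rw [dist_comm]; exact Metric.mem_ball.mp hx
      rw [← dist_eq_norm]
      linarith
    have haeK : ∀ᵐ y ∂σ, y ∈ K := by
      rw [MeasureTheory.ae_iff]
      exact hsupp
    set F : EuclideanSpace ℝ (Fin 3) → EuclideanSpace ℝ (Fin 3) → ℂ :=
      fun x y => G x y * J y m with hF
    set Φ : EuclideanSpace ℝ (Fin 3) → EuclideanSpace ℝ (Fin 3) →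
        (EuclideanSpace ℝ (Fin 3) →L[ℝ] ℂ) := fun x y =>
      (Complex.exp (-Complex.I * (k : ℂ) * (‖x - y‖ : ℂ)) / ((4 * Real.pi * ‖x - y‖ : ℝ) : ℂ) *
          (-(Complex.I * (k : ℂ)) - ((‖x - y‖ : ℝ) : ℂ)⁻¹) * ((‖x - y‖⁻¹ : ℝ) : ℂ)) •
        (Complex.ofRealCLM.comp (innerSL ℝ (x - y))) with hΦ
    set F' : EuclideanSpace ℝ (Fin 3) → EuclideanSpace ℝ (Fin 3) →
        (EuclideanSpace ℝ (Fin 3) →L[ℝ] ℂ) := fun x y => (J y m) • Φ x y with hF'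
    set B : ℝ := C * ((4 * Real.pi * (ε / 2))⁻¹ * (|k| + (ε / 2)⁻¹)) with hB
    have hΦ_bound : ∀ y ∈ K, ∀ x ∈ Metric.ball x₀ (ε / 2),
        ‖Φ x y‖ ≤ (4 * Real.pi * (ε / 2))⁻¹ * (|k| + (ε / 2)⁻¹) := by
      intro y hy x hx
      exact helmPhi_norm_le k y x (ε / 2) hεpos (hsep y hy x hx)
    have h_bound : ∀ᵐ y ∂σ, ∀ x ∈ Metric.ball x₀ (ε / 2), ‖F' x y‖ ≤ B := by
      filter_upwards [haeK] with y hy x hx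
      calc ‖F' x y‖ ≤ ‖J y m‖ * ‖Φ x y‖ := ContinuousLinearMap.opNorm_smul_le _ _
        _ ≤ B := by
            rw [hB]
            exact mul_le_mul (by simpa using hC y m)
              (hΦ_bound y hy x hx) (norm_nonneg _) hC0
    have h_diff : ∀ᵐ y ∂σ, ∀ x ∈ Metric.ball x₀ (ε / 2),
        HasFDerivAt (fun x => F x y) (F' x y) x := by
      filter_upwards [haeK] with y hy x hx
      have hxy : x ≠ y := by
        intro h
        have h2 := hsep y hy x hx
        rw [h, sub_self, norm_zero] at h2
        linarith
      have hFeq : (fun z => F z y) =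
          fun z => Complex.exp (-Complex.I * (k : ℂ) * (‖z - y‖ : ℂ)) /
            ((4 * Real.pi * ‖z - y‖ : ℝ) : ℂ) * J y m := by
        funext z
        simp only [hF]
        rw [hG z y]
      rw [hFeq]
      exact (hasFDerivAt_helmG_comp k y x hxy).mul_const _
    have hF_meas : ∀ᶠ x in nhds x₀, AEStronglyMeasurable (F x) σ :=
      Filter.Eventually.of_forall fun x =>
        ((hGmeas x).mul (hJm m)).aestronglyMeasurable
    have hballself : x₀ ∈ Metric.ball x₀ (ε / 2) := Metric.mem_ball_self hεpos
    have hF_int : Integrable (F x₀) σ := by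
      refine Integrable.mono' (integrable_const ((4 * Real.pi * (ε / 2))⁻¹ * C))
        ((hGmeas x₀).mul (hJm m)).aestronglyMeasurable ?_
      filter_upwards [haeK] with y hy
      have hsep' := hsep y hy x₀ hballself
      have hr : 0 < ‖x₀ - y‖ := lt_of_lt_of_le hεpos hsep'
      have : ‖F x₀ y‖ = ‖G x₀ y‖ * ‖J y m‖ := norm_mul _ _
      rw [this, hG x₀ y, abs_helmG k _ hr]
      refine mul_le_mul ?_ (by simpa using hC y m) (norm_nonneg _)
        (by positivity)
      gcongr <;> first | positivity | linarith [Real.pi_pos]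
    have hΨcont : Continuous fun y : EuclideanSpace ℝ (Fin 3) =>
        Complex.ofRealCLM.comp (innerSL ℝ (x₀ - y)) :=
      continuous_const.clm_comp ((innerSL ℝ).continuous.comp
        (continuous_const.sub continuous_id))
    have hsmeas : Measurable fun y : EuclideanSpace ℝ (Fin 3) =>
        Complex.exp (-Complex.I * (k : ℂ) * (‖x₀ - y‖ : ℂ)) /
            ((4 * Real.pi * ‖x₀ - y‖ : ℝ) : ℂ) *
          (-(Complex.I * (k : ℂ)) - ((‖x₀ - y‖ : ℝ) : ℂ)⁻¹) * ((‖x₀ - y‖⁻¹ : ℝ) : ℂ) := by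
      have h1 := hnmeas x₀
      refine Measurable.mul (Measurable.mul ?_ ?_) ?_
      · exact (Complex.measurable_exp.comp
          ((Complex.measurable_ofReal.comp h1).const_mul _)).div
          (Complex.measurable_ofReal.comp (h1.const_mul _))
      · refine Measurable.sub measurable_const ?_
        simp only [← Complex.ofReal_inv]
        exact Complex.measurable_ofReal.comp h1.inv
      · exact Complex.measurable_ofReal.comp h1.inv
    have hF'_meas : AEStronglyMeasurable (F' x₀) σ := by
      have h2 : AEStronglyMeasurable (Φ x₀) σ :=
        (hsmeas.aestronglyMeasurable).smul hΨcont.aestronglyMeasurable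
      exact ((hJm m).aestronglyMeasurable).smul h2
    have hmain := hasFDerivAt_integral_of_dominated_of_fderiv_le (Metric.ball_mem_nhds x₀ hεpos) hF_meas hF_int
      hF'_meas h_bound (integrable_const B) h_diff
    have hAeq : (fun z => A z m) =ᶠ[nhds x₀] fun x => ∫ y, F x y ∂σ := by
      filter_upwards [hK.isClosed.isOpen_compl.mem_nhds hx₀] with z hz
      exact hA z hz m
    have hF'_int : Integrable (F' x₀) σ := by
      refine Integrable.mono' (integrable_const B) hF'_meas ?_
      filter_upwards [h_bound] with y hy
      exact hy x₀ hballself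
    refine ⟨∫ y, F' x₀ y ∂σ, hmain.congr_of_eventuallyEq hAeq, ?_⟩
    intro j
    have hptwise : ∀ y, F' x₀ y (EuclideanSpace.single j 1) = gradG x₀ y j * J y m := by
      intro y
      have hinner : (inner ℝ (x₀ - y) (EuclideanSpace.single j (1:ℝ)) : ℝ) = (x₀ - y) j := by
        rw [real_inner_comm, EuclideanSpace.inner_single_left]
        simp
      simp only [hF', hΦ, ContinuousLinearMap.smul_apply, ContinuousLinearMap.coe_comp',
        Function.comp_apply, Complex.ofRealCLM_apply, innerSL_apply_apply, smul_eq_mul]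
      rw [hinner, hgradG x₀ y j, hG x₀ y]
      have hsub : ((y - x₀) j : ℝ) = -((x₀ - y) j) := by
        simp [PiLp.sub_apply]
      rw [hsub]
      push_cast
      ring
    constructor
    · exact (hF'_int.apply_continuousLinearMap _).congr
        (Filter.Eventually.of_forall hptwise)
    · rw [ContinuousLinearMap.integral_apply hF'_int]
      exact integral_congr_ae (Filter.Eventually.of_forall hptwise)
  constructor
  · intro x hx
    have hdiff : DifferentiableAt ℝ A x := by
      rw [differentiableAt_pi]
      intro m
      obtain ⟨L, hL, -⟩ := main x hx m
      exact hL.differentiableAt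
    exact hdiff.differentiableWithinAt
  · intro x hx
    have hcomp : ∀ m j : Fin 3,
        fderiv ℝ (fun z => A z m) x (EuclideanSpace.single j 1) =
          ∫ y, gradG x y j * J y m ∂σ := by
      intro m j
      obtain ⟨L, hL, h⟩ := main x hx m
      rw [hL.fderiv]
      exact (h j).2
    have hint : ∀ m j : Fin 3, Integrable (fun y => gradG x y j * J y m) σ := by
      intro m j
      obtain ⟨L, hL, h⟩ := main x hx m
      exact (h j).1
    funext m'
    fin_cases m'
    · show fderiv ℝ (fun z => A z 2) x (EuclideanSpace.single 1 1) -
          fderiv ℝ (fun z => A z 1) x (EuclideanSpace.single 2 1) = _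
      rw [hcomp, hcomp, ← integral_sub (hint _ _) (hint _ _)]
      refine integral_congr_ae (Filter.Eventually.of_forall fun y => ?_)
      simp [cross_apply]
    · show fderiv ℝ (fun z => A z 0) x (EuclideanSpace.single 2 1) -
          fderiv ℝ (fun z => A z 2) x (EuclideanSpace.single 0 1) = _
      rw [hcomp, hcomp, ← integral_sub (hint _ _) (hint _ _)]
      refine integral_congr_ae (Filter.Eventually.of_forall fun y => ?_)
      simp [cross_apply]
    · show fderiv ℝ (fun z => A z 1) x (EuclideanSpace.single 0 1) -
          fderiv ℝ (fun z => A z 0) x (EuclideanSpace.single 1 1) = _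
      rw [hcomp, hcomp, ← integral_sub (hint _ _) (hint _ _)]
      refine integral_congr_ae (Filter.Eventually.of_forall fun y => ?_)
      simp [cross_apply]
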